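/- Let X and V be standard Borel spaces, and let Φ : Multiset X → V. Suppose that for every m ∈ ℕ the composite map from (Fin m → X) to V sending a tuple (x₁, …, x_m) to Φ applied to the multiset {x₁, …, x_m} (i.e. Φ ∘ symₘ, where symₘ is the symmetrization map) is measurable with respect to the product (pi) measurable structure on Fin m → X. Then Φ is measurable with respect to the counting σ-algebra on Multiset X. -/

import Mathlib

/- `countIn D E` is the number of elements of the finite multiset `D` lying in the set `E`,
counted with multiplicity. -/
open Classical in
noncomputable def countIn {X : Type*} (D : Multiset X) (E : Set X) : ℕ :=
  (D.filter (· ∈ E)).card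

/-- The counting σ-algebra on the space of finite multisets over a measurable space `X`:
generated by the counting events `C(E,n) = {D | countIn D E = n}` for `E` measurable, `n : ℕ`. -/
def countingMS (X : Type*) [MeasurableSpace X] : MeasurableSpace (Multiset X) :=
  MeasurableSpace.generateFrom
    {C : Set (Multiset X) |
      ∃ (E : Set X) (n : ℕ), MeasurableSet E ∧ C = {D : Multiset X | countIn D E = n}}

open Set

section Aux

variable {X : Type*} [MeasurableSpace X]

lemma measurableSet_countIn_eq {E : Set X} (hE : MeasurableSet E) (n : ℕ) :
    @MeasurableSet (Multiset X) (countingMS X) {D : Multiset X | countIn D E = n} :=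
  MeasurableSpace.measurableSet_generateFrom ⟨E, n, hE, rfl⟩

lemma measurable_countIn {E : Set X} (hE : MeasurableSet E) :
    @Measurable (Multiset X) ℕ (countingMS X) _ (fun D => countIn D E) := by
  letI := countingMS X
  refine measurable_to_countable' (fun n => ?_)
  have : (fun D : Multiset X => countIn D E) ⁻¹' {n} = {D | countIn D E = n} := rfl
  rw [this]
  exact measurableSet_countIn_eq hE n

lemma countIn_univ (D : Multiset X) : countIn D univ = Multiset.card D := by
  classical
  simp only [countIn]
  have : ∀ (inst : DecidablePred (· ∈ (univ : Set X))) (M : Multiset X),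
      (@Multiset.filter X (· ∈ (univ : Set X)) inst M).card = Multiset.card M := by
    intro inst M
    induction M using Multiset.induction_on with
    | empty => simp
    | cons a s ih =>
      rw [Multiset.filter_cons_of_pos _ (Set.mem_univ a), Multiset.card_cons,
        Multiset.card_cons, ih]
  exact this _ D

/-- Order statistic vs counting: for a sorted list, the `i`-th entry is `≤ t` iff at least
`i+1` entries are `≤ t`. -/
lemma sorted_get_le_iff {l : List ℝ} (hl : l.Pairwise (· ≤ ·)) {t : ℝ} :
    ∀ i : ℕ, ∀ hi : i < l.length,
      (l.get ⟨i, hi⟩ ≤ t ↔ i + 1 ≤ l.countP (fun a => decide (a ≤ t))) := by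
  induction l with
  | nil => intro i hi; simp at hi
  | cons a l ih =>
    have hrel : ∀ b ∈ l, a ≤ b := fun b hb => (List.rel_of_pairwise_cons hl) hb
    have hl' : l.Pairwise (· ≤ ·) := hl.of_cons
    intro i hi
    cases i with
    | zero =>
      simp only [List.get, List.countP_cons]
      constructor
      · intro hat
        have hd : decide (a ≤ t) = true := by simpa using hat
        rw [if_pos hd]
        omega
      · intro hc
        by_contra hat
        have h0 : l.countP (fun a => decide (a ≤ t)) = 0 := by
          rw [List.countP_eq_zero]
          intro b hb
          simp only [decide_eq_true_eq]
          intro hbt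
          exact hat (le_trans (hrel b hb) hbt)
        have hdf : decide (a ≤ t) = false := by simpa using hat
        rw [if_neg (by simp [hdf]), h0] at hc
        simp at hc
    | succ i =>
      have hi' : i < l.length := by simpa using hi
      have hget : (a :: l).get ⟨i + 1, hi⟩ = l.get ⟨i, hi'⟩ := rfl
      rw [hget, List.countP_cons]
      by_cases hat : a ≤ t
      · have hd : decide (a ≤ t) = true := by simpa using hat
        rw [ih hl' i hi', if_pos hd]
        omega
      · have hfalse : decide (a ≤ t) = false := by simpa using hat
        have h0 : l.countP (fun a => decide (a ≤ t)) = 0 := by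
          rw [List.countP_eq_zero]
          intro b hb
          simp only [decide_eq_true_eq]
          intro hbt
          exact hat (le_trans (hrel b hb) hbt)
        rw [if_neg (by simp [hfalse]), h0]
        constructor
        · intro hle
          exact absurd (le_trans (hrel _ (l.get_mem _)) hle) hat
        · intro hc
          simp at hc

end Aux

theorem aggregator_measurable_of_symmetrized_measurable
    {X V : Type*} [MeasurableSpace X] [StandardBorelSpace X]
    [MeasurableSpace V] [StandardBorelSpace V]
    (Φ : Multiset X → V)
    (h : ∀ m : ℕ, Measurable fun x : Fin m → X => Φ ↑(List.ofFn x)) :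
    @Measurable _ _ (countingMS X) _ Φ := by
  classical
  letI : MeasurableSpace (Multiset X) := countingMS X
  rcases isEmpty_or_nonempty X with hX | hX
  · haveI : Subsingleton (Multiset X) := ⟨fun a b => by
      have ha : a = 0 := Multiset.eq_zero_of_forall_notMem (fun x _ => (hX.false x).elim)
      have hb : b = 0 := Multiset.eq_zero_of_forall_notMem (fun x _ => (hX.false x).elim)
      rw [ha, hb]⟩
    exact Subsingleton.measurable
  -- embed X into ℝ
  obtain ⟨f, hf⟩ := MeasureTheory.exists_measurableEmbedding_real X
  obtain ⟨r, hr_meas, hr⟩ :=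
    hf.exists_measurable_extend (measurable_id (α := X)) (fun _ => ⟨Classical.arbitrary X⟩)
  -- order statistics
  set Q : ℕ → Multiset X → ℝ := fun i D => ((D.map f).sort (· ≤ ·)).getD i 0 with hQdef
  -- counting facts
  have hcard : Measurable fun D : Multiset X => Multiset.card D := by
    have := measurable_countIn (X := X) MeasurableSet.univ
    simpa [countIn_univ] using this
  have hcount_eq : ∀ (t : ℝ) (D : Multiset X),
      countIn D (f ⁻¹' Iic t) =
        ((D.map f).sort (· ≤ ·)).countP (fun a => decide (a ≤ t)) := by
    intro t D
    have h1 : (↑(((D.map f).sort (· ≤ ·)).filter (fun a => decide (a ≤ t))) : Multiset ℝ)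
        = (D.map f).filter (fun a => a ≤ t) := by
      rw [← Multiset.filter_coe]
      rw [Multiset.sort_eq]
    have h2 : ((D.map f).filter (fun a => a ≤ t)).card
        = ((D.map f).sort (· ≤ ·)).countP (fun a => decide (a ≤ t)) := by
      rw [← h1, Multiset.coe_card, List.countP_eq_length_filter]
    rw [← h2]
    simp only [countIn]
    rw [Multiset.filter_map, Multiset.card_map]
    refine congrArg Multiset.card (Multiset.filter_congr ?_)
    intro x _
    simp [Set.mem_Iic, Function.comp]
  -- pointwise description of {Q i ≤ t}
  have key_iff : ∀ (i : ℕ) (t : ℝ) (D : Multiset X),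
      Q i D ≤ t ↔ ((i < Multiset.card D ∧ i + 1 ≤ countIn D (f ⁻¹' Iic t)) ∨
        (¬ i < Multiset.card D ∧ (0:ℝ) ≤ t)) := by
    intro i t D
    set l := (D.map f).sort (· ≤ ·) with hl
    have hlen : l.length = Multiset.card D := by
      rw [hl, Multiset.length_sort, Multiset.card_map]
    have hsorted : l.Pairwise (· ≤ ·) := Multiset.pairwise_sort _ _
    by_cases hi : i < Multiset.card D
    · have hi' : i < l.length := by omega
      have hgetD : Q i D = l.get ⟨i, hi'⟩ := by
        rw [hQdef]; exact List.getD_eq_getElem l 0 hi'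
      rw [hgetD, sorted_get_le_iff hsorted i hi', hcount_eq t D]
      constructor
      · intro hcc; exact Or.inl ⟨hi, hcc⟩
      · rintro (⟨_, hcc⟩ | ⟨hcon, _⟩)
        · exact hcc
        · exact absurd hi hcon
    · have hlen' : l.length ≤ i := by omega
      have : Q i D = 0 := by
        rw [hQdef]; exact List.getD_eq_default l 0 hlen'
      rw [this]
      constructor
      · intro ht; exact Or.inr ⟨hi, ht⟩
      · rintro (⟨hcon, _⟩ | ⟨_, ht⟩)
        · exact absurd hcon hi
        · exact ht
  have hQm : ∀ i : ℕ, Measurable (Q i) := by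
    intro i
    apply measurable_of_Iic
    intro t
    have hset : Q i ⁻¹' Iic t =
        (((fun D : Multiset X => Multiset.card D) ⁻¹' {n | i < n}) ∩
          ((fun D : Multiset X => countIn D (f ⁻¹' Iic t)) ⁻¹' {n | i + 1 ≤ n})) ∪
        (((fun D : Multiset X => Multiset.card D) ⁻¹' {n | ¬ i < n}) ∩
          (if (0:ℝ) ≤ t then univ else ∅)) := by
      ext D
      simp only [mem_preimage, mem_Iic, mem_union, mem_inter_iff, mem_setOf_eq]
      rw [key_iff i t D]
      by_cases ht : (0:ℝ) ≤ t <;> simp [ht]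
    rw [hset]
    have hcm : Measurable fun D : Multiset X => countIn D (f ⁻¹' Iic t) :=
      measurable_countIn (hf.measurable measurableSet_Iic)
    refine MeasurableSet.union ?_ ?_
    · exact (hcard (by trivial)).inter (hcm (by trivial))
    · refine (hcard (by trivial)).inter ?_
      split <;> simp
  -- reconstruction: for card D = m, the sorted representative maps back to D
  have reconstruct : ∀ (m : ℕ) (D : Multiset X), Multiset.card D = m →
      (↑(List.ofFn fun i : Fin m => r (Q (i : ℕ) D)) : Multiset X) = D := by
    intro m D hm
    set l := (D.map f).sort (· ≤ ·) with hl
    have hlen : l.length = m := by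
      rw [hl, Multiset.length_sort, Multiset.card_map, hm]
    have hlist : (List.ofFn fun i : Fin m => r (Q (i : ℕ) D)) = l.map r := by
      apply List.ext_get
      · simp [hlen]
      · intro n h1 h2
        have hn : n < m := by simpa using h1
        have hn' : n < l.length := by omega
        have hQ : Q n D = l[n] := by
          rw [hQdef]; exact List.getD_eq_getElem l 0 hn'
        simp only [List.get_eq_getElem, List.getElem_ofFn, List.getElem_map]
        show r (Q n D) = r l[n]
        rw [hQ]
    rw [hlist]
    have : (↑(l.map r) : Multiset X) = Multiset.map r ↑l := by
      simp
    rw [this, hl, Multiset.sort_eq, Multiset.map_map, hr, Multiset.map_id]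
  -- assemble
  intro S hS
  have key : Φ ⁻¹' S = ⋃ m : ℕ,
      ({D : Multiset X | Multiset.card D = m} ∩
        ((fun D : Multiset X =>
          Φ ↑(List.ofFn fun i : Fin m => r (Q (i : ℕ) D))) ⁻¹' S)) := by
    ext D
    simp only [mem_iUnion, mem_inter_iff, mem_preimage, mem_setOf_eq]
    constructor
    · intro hD
      refine ⟨Multiset.card D, rfl, ?_⟩
      rw [reconstruct (Multiset.card D) D rfl]
      exact hD
    · rintro ⟨m, hm, hmem⟩
      rwa [reconstruct m D hm] at hmem
  rw [key]
  refine MeasurableSet.iUnion fun m => MeasurableSet.inter ?_ ?_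
  · exact hcard (MeasurableSet.singleton m)
  · refine ((h m).comp (measurable_pi_lambda _ fun i => hr_meas.comp (hQm i))) hS
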